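/- Fix k ∈ ℕ. On ℝ with the standard dyadic grid, let 𝒦 := {L_{(j)} : L ∈ 𝒟, L^{(k)} = [0,1), 0 ≤ j ≤ k}, where L_{(j)} is the unique dyadic interval with (L_{(j)})^{(j)} = L and inf L_{(j)} = inf L. Let f := 2^k ∑_{L : L^{(k)}=[0,1)} 1_{L_{(k)}}. Then ∑_{K∈𝒦} (1_{K^{(k)}}/|K^{(k)}|) ∫_K f = (k+1)·1_{[0,1)} pointwise on ℝ. -/

import Mathlib

open MeasureTheory Finset

/-- The dyadic interval `K = L_{(j)} = [i·2^{-k}, i·2^{-k} + 2^{-k-j})`, where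
`L = [i·2^{-k}, (i+1)·2^{-k})` is a dyadic interval with `L^{(k)} = [0,1)`. -/
noncomputable def Kint (k i j : ℕ) : Set ℝ :=
  Set.Ico ((i : ℝ) / 2 ^ k) ((i : ℝ) / 2 ^ k + 1 / (2 ^ k * 2 ^ j))

/-- The `k`-generations-older dyadic ancestor `K^{(k)}` of `K = Kint k i j`;
it has length `2^{-j}` and left endpoint `⌊i/2^{k-j}⌋·2^{-j}`. -/
noncomputable def KintAnc (k i j : ℕ) : Set ℝ :=
  Set.Ico ((↑(i / 2 ^ (k - j)) : ℝ) / 2 ^ j) ((↑(i / 2 ^ (k - j)) : ℝ) / 2 ^ j + 1 / 2 ^ j)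

lemma integral_f (k i j : ℕ) (hi : i < 2 ^ k) (hj : j ≤ k) :
    (∫ y in Kint k i j, (2 ^ k *
      ∑ i' ∈ range (2 ^ k),
        (Set.Ico ((i' : ℝ) / 2 ^ k) ((i' : ℝ) / 2 ^ k + 1 / 4 ^ k)).indicator
          (fun _ => (1 : ℝ)) y)) = 1 / 2 ^ k := by
  have h2 : (0:ℝ) < 2 ^ k := by positivity
  have h2j : (1:ℝ) ≤ 2 ^ j := one_le_pow₀ (by norm_num)
  have h4 : (1:ℝ) / 4 ^ k ≤ 1 / 2 ^ k := by
    apply one_div_le_one_div_of_le h2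
    exact pow_le_pow_left₀ (by norm_num) (by norm_num) k
  have hkj : (1:ℝ) / (2 ^ k * 2 ^ j) ≤ 1 / 2 ^ k := by
    apply one_div_le_one_div_of_le h2
    nlinarith
  have h42 : (1:ℝ) / 4 ^ k ≤ 1 / (2 ^ k * 2 ^ j) := by
    apply one_div_le_one_div_of_le (by positivity)
    have : (4:ℝ) ^ k = 2 ^ k * 2 ^ k := by
      rw [← mul_pow]; norm_num
    rw [this]
    have : (2:ℝ) ^ j ≤ 2 ^ k := pow_le_pow_right₀ (by norm_num) hj
    nlinarith
  -- rewrite each set-integral of an indicator as a volume of intersection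
  have key : ∀ i' ∈ range (2 ^ k),
      (∫ y in Kint k i j,
        (Set.Ico ((i' : ℝ) / 2 ^ k) ((i' : ℝ) / 2 ^ k + 1 / 4 ^ k)).indicator
          (fun _ => (1 : ℝ)) y) = if i' = i then 1 / 4 ^ k else 0 := by
    intro i' hi'
    rw [setIntegral_indicator measurableSet_Ico]
    rw [Kint, Set.Ico_inter_Ico, setIntegral_const, smul_eq_mul, mul_one]
    split_ifs with h
    · subst h
      rw [max_self]
      rw [min_eq_right (by linarith)]
      rw [measureReal_def, Real.volume_Ico]
      rw [ENNReal.toReal_ofReal (by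
        have h40 : (0:ℝ) < 1/4^k := by positivity
        linarith)]
      ring
    · have : min ((i:ℝ) / 2 ^ k + 1 / (2 ^ k * 2 ^ j)) ((i':ℝ) / 2 ^ k + 1 / 4 ^ k)
          ≤ max ((i:ℝ) / 2 ^ k) ((i':ℝ) / 2 ^ k) := by
        rcases lt_or_gt_of_ne h with hlt | hgt
        · -- i' < i
          have : (i':ℝ) + 1 ≤ i := by exact_mod_cast hlt
          calc min _ _ ≤ (i':ℝ) / 2 ^ k + 1 / 4 ^ k := min_le_right _ _
            _ ≤ (i':ℝ) / 2 ^ k + 1 / 2 ^ k := by linarith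
            _ = ((i':ℝ) + 1) / 2 ^ k := by ring
            _ ≤ (i:ℝ) / 2 ^ k := by gcongr
            _ ≤ _ := le_max_left _ _
        · -- i < i'
          have : (i:ℝ) + 1 ≤ i' := by exact_mod_cast hgt
          calc min _ _ ≤ (i:ℝ) / 2 ^ k + 1 / (2 ^ k * 2 ^ j) := min_le_left _ _
            _ ≤ (i:ℝ) / 2 ^ k + 1 / 2 ^ k := by linarith
            _ = ((i:ℝ) + 1) / 2 ^ k := by ring
            _ ≤ (i':ℝ) / 2 ^ k := by gcongr
            _ ≤ _ := le_max_right _ _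
      rw [Set.Ico_eq_empty (not_lt.mpr this), measureReal_def, measure_empty]
      simp
  rw [MeasureTheory.integral_const_mul]
  rw [MeasureTheory.integral_finset_sum _ (fun i' _ => by
    apply MeasureTheory.Integrable.integrableOn
    rw [integrable_indicator_iff measurableSet_Ico]
    apply (integrableOn_const_iff).mpr
    right
    rw [Real.volume_Ico]
    exact ENNReal.ofReal_lt_top)]
  rw [Finset.sum_congr rfl key, Finset.sum_ite_eq' (range (2^k)) i]
  rw [if_pos (mem_range.mpr hi)]
  have : (4:ℝ) ^ k = 2 ^ k * 2 ^ k := by rw [← mul_pow]; norm_num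
  rw [this]
  field_simp

lemma sum_indicator_anc (k j : ℕ) (hj : j ≤ k) (x : ℝ) :
    ∑ i ∈ range (2 ^ k), (KintAnc k i j).indicator (fun _ => (1:ℝ)) x
      = 2 ^ (k - j) * (Set.Ico (0:ℝ) 1).indicator (fun _ => (1:ℝ)) x := by
  have hp : (0:ℝ) < 2 ^ j := by positivity
  have hMpos : 0 < 2 ^ (k - j) := Nat.pow_pos (by norm_num)
  have hMk : 2 ^ j * 2 ^ (k - j) = 2 ^ k := by
    rw [← pow_add, Nat.add_sub_cancel' hj]
  have hdivlt : ∀ i, i < 2 ^ k → i / 2 ^ (k - j) < 2 ^ j := by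
    intro i hi
    rw [Nat.div_lt_iff_lt_mul hMpos, hMk]
    exact hi
  by_cases hx : x ∈ Set.Ico (0:ℝ) 1
  · obtain ⟨hx0, hx1⟩ := hx
    have hx2 : (0:ℝ) ≤ x * 2 ^ j := by positivity
    set m₀ := ⌊x * 2 ^ j⌋₊ with hm₀def
    have hm₀ : m₀ < 2 ^ j := by
      rw [hm₀def, Nat.floor_lt hx2]
      push_cast
      nlinarith
    have hmem : ∀ c : ℕ, x ∈ Set.Ico ((c:ℝ)/2^j) ((c:ℝ)/2^j + 1/2^j) ↔ m₀ = c := by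
      intro c
      rw [hm₀def, Nat.floor_eq_iff hx2]
      simp only [Set.mem_Ico,
        show ((c:ℝ))/2^j + 1/2^j = ((c:ℝ)+1)/2^j from by ring,
        div_le_iff₀ hp, lt_div_iff₀ hp]
    have hterm : ∀ i, (KintAnc k i j).indicator (fun _ => (1:ℝ)) x
        = if m₀ = i / 2 ^ (k - j) then 1 else 0 := by
      intro i
      rw [KintAnc, Set.indicator_apply]
      rw [if_congr (hmem (i / 2 ^ (k - j))) rfl rfl]
    rw [Finset.sum_congr rfl (fun i _ => hterm i)]
    rw [Finset.sum_boole]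
    have hfil : Finset.filter (fun i => m₀ = i / 2 ^ (k - j)) (range (2 ^ k))
        = Finset.Ico (m₀ * 2 ^ (k - j)) (m₀ * 2 ^ (k - j) + 2 ^ (k - j)) := by
      ext i
      simp only [Finset.mem_filter, Finset.mem_range, Finset.mem_Ico]
      constructor
      · rintro ⟨hiN, heq⟩
        rw [heq]
        constructor
        · exact Nat.div_mul_le_self i _
        · calc i = 2^(k-j) * (i / 2^(k-j)) + i % 2^(k-j) := (Nat.div_add_mod i _).symm
            _ < 2^(k-j) * (i / 2^(k-j)) + 2^(k-j) :=
                Nat.add_lt_add_left (Nat.mod_lt i hMpos) _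
            _ = i / 2^(k-j) * 2^(k-j) + 2^(k-j) := by ring
      · rintro ⟨h1, h2⟩
        have heq : i / 2 ^ (k - j) = m₀ :=
          Nat.div_eq_of_lt_le h1 (by rw [Nat.succ_mul]; exact h2)
        constructor
        · calc i < m₀ * 2 ^ (k - j) + 2 ^ (k - j) := h2
            _ = (m₀ + 1) * 2 ^ (k - j) := by ring
            _ ≤ 2 ^ j * 2 ^ (k - j) := Nat.mul_le_mul_right _ hm₀
            _ = 2 ^ k := hMk
        · exact heq.symm
    rw [hfil, Nat.card_Ico, Nat.add_sub_cancel_left]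
    rw [Set.indicator_of_mem (show x ∈ Set.Ico (0:ℝ) 1 from ⟨hx0, hx1⟩)]
    push_cast
    ring
  · rw [Set.indicator_of_notMem hx, mul_zero]
    apply Finset.sum_eq_zero
    intro i hi
    apply Set.indicator_of_notMem
    rw [KintAnc]
    intro hxm
    apply hx
    have hm := hdivlt i (mem_range.mp hi)
    constructor
    · exact le_trans (by positivity) hxm.1
    · have h2 : x < (↑(i / 2 ^ (k - j)) + 1 : ℝ) / 2 ^ j := by
        have := hxm.2
        rw [show (↑(i / 2 ^ (k - j)) : ℝ)/2^j + 1/2^j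
            = (↑(i / 2 ^ (k - j)) + 1 : ℝ)/2^j from by ring] at this
        exact this
      calc x < (↑(i / 2 ^ (k - j)) + 1 : ℝ) / 2 ^ j := h2
        _ ≤ 1 := by
          rw [div_le_one hp]
          have : (i / 2 ^ (k - j) + 1 : ℕ) ≤ 2 ^ j := hm
          exact_mod_cast this

/-- with `𝒦 = {L_{(j)} : L^{(k)} = [0,1), 0 ≤ j ≤ k}` and
`f = 2^k ∑_{L : L^{(k)} = [0,1)} 1_{L_{(k)}}`, we have
`∑_{K ∈ 𝒦} (1_{K^{(k)}}/|K^{(k)}|) ∫_K f = (k+1)·1_{[0,1)}` pointwise on `ℝ`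
(here `1/|K^{(k)}| = 2^j`). -/
theorem stmt7 (k : ℕ) :
    let f : ℝ → ℝ := fun x => 2 ^ k *
      ∑ i ∈ range (2 ^ k),
        (Set.Ico ((i : ℝ) / 2 ^ k) ((i : ℝ) / 2 ^ k + 1 / 4 ^ k)).indicator
          (fun _ => (1 : ℝ)) x
    ∀ x : ℝ,
      ∑ i ∈ range (2 ^ k), ∑ j ∈ range (k + 1),
          (KintAnc k i j).indicator (fun _ => (1 : ℝ)) x * 2 ^ j *
            ∫ y in Kint k i j, f y
        = (k + 1) * (Set.Ico (0 : ℝ) 1).indicator (fun _ => (1 : ℝ)) x := by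
  intro f x
  have h2 : (0:ℝ) < 2 ^ k := by positivity
  rw [Finset.sum_comm]
  have hout : ∀ j ∈ range (k + 1),
      ∑ i ∈ range (2 ^ k),
        (KintAnc k i j).indicator (fun _ => (1:ℝ)) x * 2 ^ j *
          ∫ y in Kint k i j, f y
      = (Set.Ico (0:ℝ) 1).indicator (fun _ => (1:ℝ)) x := by
    intro j hjm
    have hj : j ≤ k := Nat.lt_succ_iff.mp (mem_range.mp hjm)
    have hin : ∀ i ∈ range (2 ^ k),
        (KintAnc k i j).indicator (fun _ => (1:ℝ)) x * 2 ^ j *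
          (∫ y in Kint k i j, f y)
        = (KintAnc k i j).indicator (fun _ => (1:ℝ)) x * (2 ^ j / 2 ^ k) := by
      intro i hi
      have : (∫ y in Kint k i j, f y) = 1 / 2 ^ k :=
        integral_f k i j (mem_range.mp hi) hj
      rw [this]
      ring
    rw [Finset.sum_congr rfl hin, ← Finset.sum_mul, sum_indicator_anc k j hj x]
    have hpow : (2:ℝ) ^ (k - j) * 2 ^ j = 2 ^ k := by
      rw [← pow_add, Nat.sub_add_cancel hj]
    calc 2 ^ (k - j) * (Set.Ico (0:ℝ) 1).indicator (fun _ => (1:ℝ)) x * (2 ^ j / 2 ^ k)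
        = (Set.Ico (0:ℝ) 1).indicator (fun _ => (1:ℝ)) x * ((2 ^ (k - j) * 2 ^ j) / 2 ^ k) := by
          ring
      _ = _ := by rw [hpow, div_self (ne_of_gt h2), mul_one]
  rw [Finset.sum_congr rfl hout, Finset.sum_const, card_range, nsmul_eq_mul]
  push_cast
  ring
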